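/- If in the Propus array the circulant matrix C_1 is symmetric and C_2 = C_3, then the resulting 4v × 4v matrix P = [-C_1, C_2R, C_3R, C_4R; C_3R, RC_4, C_1, -RC_2; C_2R, C_1, -RC_4, RC_3; C_4R, -RC_3, RC_2, C_1] is a symmetric matrix. -/
import Mathlib


open Matrix

/-- If in the Propus array the circulant block `C₁` is symmetric and `C₂ = C₃`,
then the resulting `4v × 4v` matrix is symmetric. -/
theorem stmt14 (v : ℕ) [NeZero v] (a : Fin 4 → ZMod v → ℤ)
    (C : Fin 4 → Matrix (ZMod v) (ZMod v) ℤ)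
    (hC : ∀ j i k, C j i k = a j (k - i))
    (hsym : (C 0).IsSymm) (heq : C 1 = C 2)
    (R : Matrix (ZMod v) (ZMod v) ℤ)
    (hR : ∀ i j, R i j = if i + j = -1 then 1 else 0)
    (P : Matrix (Fin 4 × ZMod v) (Fin 4 × ZMod v) ℤ)
    (hP : ∀ p q : Fin 4 × ZMod v, P p q =
      (![![-(C 0), C 1 * R, C 2 * R, C 3 * R],
         ![C 2 * R, R * C 3, C 0, -(R * C 1)],
         ![C 1 * R, C 0, -(R * C 3), R * C 2],
         ![C 3 * R, -(R * C 2), R * C 1, C 0]] p.1 q.1) p.2 q.2) :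
    P.IsSymm := by
  have hCR : ∀ (j : Fin 4) (i k : ZMod v), (C j * R) i k = a j (-1 - k - i) := by
    intro j i k
    rw [Matrix.mul_apply]
    have h1 : ∀ x : ZMod v, C j i x * R x k
        = if x = -1 - k then a j (-1 - k - i) else 0 := by
      intro x
      rw [hC, hR]
      by_cases h : x = -1 - k
      · have : x + k = -1 := by rw [h]; ring
        simp [h, this]
      · have : ¬ (x + k = -1) := fun hh => h (eq_sub_iff_add_eq.mpr hh)
        simp [h, this]
    rw [Finset.sum_congr rfl (fun x _ => h1 x), Finset.sum_ite_eq' Finset.univ]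
    simp
  have hRC : ∀ (j : Fin 4) (i k : ZMod v), (R * C j) i k = a j (k + 1 + i) := by
    intro j i k
    rw [Matrix.mul_apply]
    have h1 : ∀ x : ZMod v, R i x * C j x k
        = if x = -1 - i then a j (k + 1 + i) else 0 := by
      intro x
      rw [hC, hR]
      by_cases h : x = -1 - i
      · subst h
        have hcond : i + (-1 - i) = -1 := by ring
        rw [if_pos hcond, if_pos rfl, one_mul]
        congr 1; ring
      · have : ¬ (i + x = -1) := fun hh => h (by linear_combination hh)
        simp [h, this]
    rw [Finset.sum_congr rfl (fun x _ => h1 x), Finset.sum_ite_eq' Finset.univ]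
    simp
  have hCRsymm : ∀ (j : Fin 4) (i k : ZMod v), (C j * R) k i = (C j * R) i k := by
    intro j i k; rw [hCR, hCR]; ring_nf
  have hRCsymm : ∀ (j : Fin 4) (i k : ZMod v), (R * C j) k i = (R * C j) i k := by
    intro j i k; rw [hRC, hRC]; ring_nf
  have h0 : ∀ i k : ZMod v, C 0 k i = C 0 i k := fun i k => hsym.apply i k
  rw [Matrix.IsSymm]
  ext ⟨p1, p2⟩ ⟨q1, q2⟩
  rw [Matrix.transpose_apply, hP, hP]
  fin_cases p1 <;> fin_cases q1 <;>
    simp only [Fin.mk_zero, Fin.mk_one, show (⟨2, by norm_num⟩ : Fin 4) = 2 from rfl,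
      show (⟨3, by norm_num⟩ : Fin 4) = 3 from rfl, Matrix.cons_val', Matrix.cons_val_zero,
      Matrix.cons_val_one, Matrix.head_cons, Matrix.head_fin_const, Matrix.cons_val_fin_one,
      Matrix.cons_val_two, Matrix.cons_val_three, Matrix.tail_cons, Fin.isValue,
      Matrix.neg_apply, heq] <;>
    first
      | exact h0 p2 q2
      | exact hCRsymm _ p2 q2
      | exact hRCsymm _ p2 q2
      | exact congrArg Neg.neg (h0 p2 q2)
      | exact congrArg Neg.neg (hCRsymm _ p2 q2)
      | exact congrArg Neg.neg (hRCsymm _ p2 q2)
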